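/- Under irreducibility (A₇), every non-trivial Walrasian expectations quasi-equilibrium (x, π) of the discrete economy 𝓔 is a Walrasian expectations equilibrium; i.e., if ∑_ω ⟨π(ω), aᵢ(ω)⟩ ≠ 0 for some agent i, and (A₇) holds, then for every agent j, ∑_ω ⟨π(ω), a_j(ω)⟩ ≠ 0 (so every agent's bundle x_j maximizes V_j on B_j(π)). -/

import Mathlib

open Finset

/-- Under irreducibility (A₇), every non-trivial Walrasian expectations
quasi-equilibrium `(x, π)` of the discrete economy `𝓔` is a Walrasian expectations
equilibrium: if the value of some agent's endowment is nonzero, then the value of every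
agent's endowment is nonzero. -/
theorem nontrivial_quasi_equilibrium_is_equilibrium
    {Y : Type*} [NormedAddCommGroup Y] [Lattice Y] [IsOrderedAddMonoid Y] [HasSolidNorm Y] [NormedSpace ℝ Y]
    {Ω : Type*} [Fintype Ω] {n : ℕ}
    (L : Fin n → Set (Ω → Y))                -- the sets `Lᵢ` of `𝓕ᵢ`-measurable bundles
    (V : Fin n → (Ω → Y) → ℝ)                -- ex ante expected utilities
    (a : Fin n → Ω → Y) (ha : ∀ i, a i ∈ L i)
    (π : Ω → Y →L[ℝ] ℝ) (hπ : ∀ ω, ∀ y : Y, 0 ≤ y → 0 ≤ π ω y)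
    (x : Fin n → Ω → Y)
    -- `x` is a feasible allocation
    (hxL : ∀ i, x i ∈ L i) (hfeas : ∀ ω, ∑ i, x i ω ≤ ∑ i, a i ω)
    -- (A₇) irreducibility
    (hirr : ∀ x' : Fin n → Ω → Y, (∀ i, x' i ∈ L i) → (∀ ω, ∑ i, x' i ω ≤ ∑ i, a i ω) →
      ∀ N₁ N₂ : Finset (Fin n), N₁.Nonempty → N₂.Nonempty → Disjoint N₁ N₂ →
        N₁ ∪ N₂ = univ →
        ∃ y : Fin n → Ω → Y, (∀ i ∈ N₂, y i ∈ L i ∧ V i (x' i) < V i (y i)) ∧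
          ∀ ω, ∑ i ∈ N₂, y i ω ≤ ∑ i ∈ N₁, a i ω + ∑ i ∈ N₂, x' i ω)
    -- (2.1) budget membership and maximization when endowment value is nonzero
    (hbud : ∀ i, ∑ ω, π ω (x i ω) ≤ ∑ ω, π ω (a i ω))
    (hmax : ∀ i, (∑ ω, π ω (a i ω)) ≠ 0 →
      ∀ y ∈ L i, (∑ ω, π ω (y ω)) ≤ ∑ ω, π ω (a i ω) → V i y ≤ V i (x i))
    -- (2.2) aggregate budget equality
    (hagg : ∑ ω, π ω (∑ i, x i ω) = ∑ ω, π ω (∑ i, a i ω))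
    -- non-triviality
    (hnt : ∃ i, (∑ ω, π ω (a i ω)) ≠ 0) :
    ∀ j, (∑ ω, π ω (a j ω)) ≠ 0 := by
  classical
  intro j hj
  -- N₁ : zero-wealth agents, N₂ : nonzero-wealth agents
  set N₁ : Finset (Fin n) := univ.filter (fun i => (∑ ω, π ω (a i ω)) = 0) with hN₁
  set N₂ : Finset (Fin n) := univ.filter (fun i => (∑ ω, π ω (a i ω)) ≠ 0) with hN₂
  have hjN₁ : j ∈ N₁ := by simp [hN₁, hj]
  obtain ⟨i₀, hi₀⟩ := hnt
  have hi₀N₂ : i₀ ∈ N₂ := by simp [hN₂, hi₀]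
  have hdisj : Disjoint N₁ N₂ := by
    rw [Finset.disjoint_left]
    intro i h1 h2
    rw [hN₁, Finset.mem_filter] at h1
    rw [hN₂, Finset.mem_filter] at h2
    exact h2.2 h1.2
  have hunion : N₁ ∪ N₂ = univ := by
    ext i
    by_cases h : (∑ ω, π ω (a i ω)) = 0 <;> simp [hN₁, hN₂, h]
  -- each agent spends exactly his wealth
  have hsum : ∑ i, ∑ ω, π ω (x i ω) = ∑ i, ∑ ω, π ω (a i ω) := by
    have h : ∑ ω, ∑ i, π ω (x i ω) = ∑ ω, ∑ i, π ω (a i ω) := by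
      simpa only [map_sum] using hagg
    calc ∑ i, ∑ ω, π ω (x i ω) = ∑ ω, ∑ i, π ω (x i ω) := Finset.sum_comm
      _ = ∑ ω, ∑ i, π ω (a i ω) := h
      _ = ∑ i, ∑ ω, π ω (a i ω) := Finset.sum_comm
  have hvaleq : ∀ i, ∑ ω, π ω (x i ω) = ∑ ω, π ω (a i ω) := by
    have := (Finset.sum_eq_sum_iff_of_le (fun i _ => hbud i)).mp hsum
    exact fun i => this i (Finset.mem_univ i)
  -- apply irreducibility
  obtain ⟨y, hy, hyle⟩ :=
    hirr x hxL hfeas N₁ N₂ ⟨j, hjN₁⟩ ⟨i₀, hi₀N₂⟩ hdisj hunion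
  -- every agent in N₂ must overspend on y
  have hval_y : ∀ i ∈ N₂, (∑ ω, π ω (a i ω)) < ∑ ω, π ω (y i ω) := by
    intro i hi
    rw [hN₂, Finset.mem_filter] at hi
    by_contra hle
    push_neg at hle
    exact absurd ((hy i (by rw [hN₂, Finset.mem_filter]; exact hi)).2)
      (not_lt.mpr (hmax i hi.2 (y i) (hy i (by rw [hN₂, Finset.mem_filter]; exact hi)).1 hle))
  -- value of the resource constraint
  have hπle : ∀ ω, π ω (∑ i ∈ N₂, y i ω) ≤ π ω (∑ i ∈ N₁, a i ω + ∑ i ∈ N₂, x i ω) := by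
    intro ω
    have h0 := hπ ω _ (sub_nonneg.mpr (hyle ω))
    rw [map_sub] at h0
    linarith
  have hsumle : ∑ i ∈ N₂, ∑ ω, π ω (y i ω) ≤
      ∑ i ∈ N₁, ∑ ω, π ω (a i ω) + ∑ i ∈ N₂, ∑ ω, π ω (x i ω) := by
    have := Finset.sum_le_sum (fun ω (_ : ω ∈ (univ : Finset Ω)) => hπle ω)
    simpa only [map_add, map_sum, Finset.sum_add_distrib, Finset.sum_comm (s := univ)]
      using this
  have hN₁zero : ∑ i ∈ N₁, ∑ ω, π ω (a i ω) = 0 := by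
    refine Finset.sum_eq_zero fun i hi => ?_
    rw [hN₁, Finset.mem_filter] at hi
    exact hi.2
  have hstrict : ∑ i ∈ N₂, ∑ ω, π ω (a i ω) < ∑ i ∈ N₂, ∑ ω, π ω (y i ω) :=
    Finset.sum_lt_sum_of_nonempty ⟨i₀, hi₀N₂⟩ hval_y
  have hx2 : ∑ i ∈ N₂, ∑ ω, π ω (x i ω) = ∑ i ∈ N₂, ∑ ω, π ω (a i ω) :=
    Finset.sum_congr rfl fun i _ => hvaleq i
  rw [hN₁zero, zero_add, hx2] at hsumle
  linarith
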